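/- Let g : ℝᵠ → ℝ be μ-strongly convex and L-smooth with minimizer y*, let 0 < λ ≤ 1/(2L + 2μ), let y ∈ ℝᵠ, let D ∈ ℝᵠ be an arbitrary direction, and set ỹ = y - λD. Then ⟨D, y* - ỹ⟩ ≤ (2/μ)‖∇g(y) - D‖² - (μ/4)‖y* - y‖² + (λ/4)‖D‖². -/

import Mathlib

set_option maxHeartbeats 1000000


open scoped RealInnerProductSpace

/-- Descent lemma: a function with `C`-Lipschitz gradient satisfies a quadratic upper bound. -/
lemma aux_descent {q : ℕ} (f : EuclideanSpace ℝ (Fin q) → ℝ)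
    (F : EuclideanSpace ℝ (Fin q) → EuclideanSpace ℝ (Fin q))
    (hgrad : ∀ x, HasGradientAt f (F x) x)
    (C : ℝ) (hC : 0 ≤ C) (hlip : ∀ u w, ‖F u - F w‖ ≤ C * ‖u - w‖)
    (x v : EuclideanSpace ℝ (Fin q)) :
    f (x + v) ≤ f x + ⟪F x, v⟫ + C / 2 * ‖v‖ ^ 2 := by
  set φ : ℝ → ℝ := fun t => f (x + t • v) - t * ⟪F x, v⟫ - C * ‖v‖ ^ 2 * t ^ 2 / 2 with hφ
  have hd : ∀ t : ℝ, HasDerivAt φ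
      (⟪F (x + t • v), v⟫ - ⟪F x, v⟫ - C * ‖v‖ ^ 2 * t) t := by
    intro t
    have h1 : HasDerivAt (fun t : ℝ => x + t • v) v t := by
      simpa using ((hasDerivAt_id t).smul_const v).const_add x
    have h2 := (hgrad (x + t • v)).hasFDerivAt.comp_hasDerivAt t h1
    have h2' : HasDerivAt (fun t : ℝ => f (x + t • v)) ⟪F (x + t • v), v⟫ t := by
      simpa [InnerProductSpace.toDual_apply_apply, Function.comp_def] using h2
    have h3 : HasDerivAt (fun t : ℝ => t * ⟪F x, v⟫) ⟪F x, v⟫ t := by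
      simpa using (hasDerivAt_id t).mul_const (⟪F x, v⟫ : ℝ)
    have h4 : HasDerivAt (fun t : ℝ => C * ‖v‖ ^ 2 * t ^ 2 / 2) (C * ‖v‖ ^ 2 * t) t := by
      have h5 : HasDerivAt (fun t : ℝ => t ^ 2) (2 * t) t := by
        simpa using hasDerivAt_pow 2 t
      have h6 : HasDerivAt (fun t : ℝ => C * ‖v‖ ^ 2 * t ^ 2 / 2) (C * ‖v‖ ^ 2 * (2 * t) / 2) t :=
        (h5.const_mul (C * ‖v‖ ^ 2)).div_const 2
      convert h6 using 1
      ring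
    exact (h2'.sub h3).sub h4
  have hdiff : ∀ t : ℝ, DifferentiableAt ℝ φ t := fun t => (hd t).differentiableAt
  have hanti : AntitoneOn φ (Set.Ici (0 : ℝ)) := by
    apply antitoneOn_of_deriv_nonpos (convex_Ici 0)
    · exact (fun t _ => (hdiff t).continuousAt.continuousWithinAt)
    · exact fun t _ => (hdiff t).differentiableWithinAt
    · intro t ht
      rw [interior_Ici] at ht
      rw [(hd t).deriv]
      have hts : (0 : ℝ) < t := ht
      have hcs : ⟪F (x + t • v) - F x, v⟫ ≤ ‖F (x + t • v) - F x‖ * ‖v‖ :=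
        real_inner_le_norm _ _
      have hl := hlip (x + t • v) x
      have hn : ‖x + t • v - x‖ = t * ‖v‖ := by
        rw [add_sub_cancel_left, norm_smul, Real.norm_eq_abs, abs_of_pos hts]
      rw [hn] at hl
      have hsub : ⟪F (x + t • v) - F x, v⟫ = ⟪F (x + t • v), v⟫ - ⟪F x, v⟫ :=
        inner_sub_left _ _ _
      nlinarith [norm_nonneg v, norm_nonneg (F (x + t • v) - F x), mul_nonneg hC (norm_nonneg v)]
  have h01 := hanti (Set.self_mem_Ici) (by norm_num : (1:ℝ) ∈ Set.Ici (0:ℝ)) zero_le_one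
  have hφ0 : φ 0 = f x := by simp [hφ]
  have hφ1 : φ 1 = f (x + v) - ⟪F x, v⟫ - C * ‖v‖ ^ 2 / 2 := by simp [hφ]
  rw [hφ0, hφ1] at h01
  linarith

/-- Co-coercivity for a convex function with quadratic upper bound. -/
lemma aux_cocoercive_convex {q : ℕ} (f : EuclideanSpace ℝ (Fin q) → ℝ)
    (F : EuclideanSpace ℝ (Fin q) → EuclideanSpace ℝ (Fin q))
    (C : ℝ) (hC : 0 < C)
    (hconv : ∀ w z, f w + ⟪F w, z - w⟫ ≤ f z)
    (hdesc : ∀ x v, f (x + v) ≤ f x + ⟪F x, v⟫ + C / 2 * ‖v‖ ^ 2)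
    (x y : EuclideanSpace ℝ (Fin q)) :
    ‖F x - F y‖ ^ 2 ≤ C * ⟪F x - F y, x - y⟫ := by
  have key : ∀ a b : EuclideanSpace ℝ (Fin q),
      ‖F a - F b‖ ^ 2 ≤ 2 * C * (f a - f b - ⟪F b, a - b⟫) := by
    intro a b
    set v : EuclideanSpace ℝ (Fin q) := -(C⁻¹) • (F a - F b) with hv
    have h1 := hdesc a v
    have h2 := hconv b (a + v)
    have e1 : ⟪F b, a + v - b⟫ = ⟪F b, a - b⟫ + ⟪F b, v⟫ := by
      rw [show a + v - b = (a - b) + v by abel, inner_add_right]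
    have e2 : ⟪F a, v⟫ - ⟪F b, v⟫ = -(C⁻¹) * ‖F a - F b‖ ^ 2 := by
      rw [← inner_sub_left, hv, real_inner_smul_right, real_inner_self_eq_norm_sq]
    have e3 : ‖v‖ ^ 2 = C⁻¹ ^ 2 * ‖F a - F b‖ ^ 2 := by
      rw [hv, norm_smul, mul_pow, Real.norm_eq_abs, abs_neg, abs_of_pos (inv_pos.mpr hC)]
    rw [e1] at h2
    rw [e3] at h1
    have h3 : f b + ⟪F b, a - b⟫ + ⟪F b, v⟫ ≤
        f a + ⟪F a, v⟫ + C / 2 * (C⁻¹ ^ 2 * ‖F a - F b‖ ^ 2) := by linarith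
    have hCinv : C * C⁻¹ = 1 := mul_inv_cancel₀ (ne_of_gt hC)
    have h4 : C / 2 * (C⁻¹ ^ 2 * ‖F a - F b‖ ^ 2) = C⁻¹ / 2 * ‖F a - F b‖ ^ 2 := by
      field_simp
    rw [h4] at h3
    have h5 : C⁻¹ / 2 * ‖F a - F b‖ ^ 2 ≤ f a - f b - ⟪F b, a - b⟫ := by linarith [e2, h3]
    have h6 := mul_le_mul_of_nonneg_left h5 (le_of_lt (by positivity : (0:ℝ) < 2 * C))
    calc ‖F a - F b‖ ^ 2 = 2 * C * (C⁻¹ / 2 * ‖F a - F b‖ ^ 2) := by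
          field_simp
      _ ≤ 2 * C * (f a - f b - ⟪F b, a - b⟫) := h6
  have k1 := key x y
  have k2 := key y x
  have e4 : ⟪F x, y - x⟫ = -⟪F x, x - y⟫ := by
    rw [show y - x = -(x - y) by abel, inner_neg_right]
  have e5 : ‖F y - F x‖ = ‖F x - F y‖ := norm_sub_rev _ _
  have e6 : ⟪F x - F y, x - y⟫ = ⟪F x, x - y⟫ - ⟪F y, x - y⟫ := inner_sub_left _ _ _
  rw [e5] at k2
  rw [e4] at k2
  nlinarith [k1, k2]

theorem stmt_2 {q : ℕ} (g : EuclideanSpace ℝ (Fin q) → ℝ)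
    (gradg : EuclideanSpace ℝ (Fin q) → EuclideanSpace ℝ (Fin q))
    (hgrad : ∀ y, HasGradientAt g (gradg y) y)
    (μ L : ℝ) (hμ : 0 < μ)
    (hsc : ∀ y z, g z ≥ g y + ⟪gradg y, z - y⟫ + (μ / 2) * ‖z - y‖ ^ 2)
    (hsmooth : ∀ u w, ‖gradg u - gradg w‖ ≤ L * ‖u - w‖)
    (ystar : EuclideanSpace ℝ (Fin q)) (hmin : ∀ z, g ystar ≤ g z)
    (lam : ℝ) (hlam : 0 < lam) (hlam' : lam ≤ 1 / (2 * L + 2 * μ))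
    (y D ytil : EuclideanSpace ℝ (Fin q)) (hytil : ytil = y - lam • D) :
    ⟪D, ystar - ytil⟫ ≤ (2 / μ) * ‖gradg y - D‖ ^ 2
      - (μ / 4) * ‖ystar - y‖ ^ 2 + (lam / 4) * ‖D‖ ^ 2 := by
  rcases subsingleton_or_nontrivial (EuclideanSpace ℝ (Fin q)) with hsub | hnt
  · have hD : D = 0 := Subsingleton.elim _ _
    have hg : gradg y = 0 := Subsingleton.elim _ _
    have h1 : ystar = y := Subsingleton.elim _ _
    have h2 : ytil = y := Subsingleton.elim _ _
    rw [hD, hg, h1, h2]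
    simp
  -- strong monotonicity
  have mono : ∀ a b : EuclideanSpace ℝ (Fin q),
      μ * ‖a - b‖ ^ 2 ≤ ⟪gradg a - gradg b, a - b⟫ := by
    intro a b
    have h1 := hsc a b
    have h2 := hsc b a
    have e1 : ⟪gradg a, b - a⟫ = -⟪gradg a, a - b⟫ := by
      rw [show b - a = -(a - b) by abel, inner_neg_right]
    have e2 : ‖b - a‖ = ‖a - b‖ := norm_sub_rev _ _
    have e3 : ⟪gradg a - gradg b, a - b⟫ = ⟪gradg a, a - b⟫ - ⟪gradg b, a - b⟫ :=
      inner_sub_left _ _ _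
    rw [e2, e1] at h1
    nlinarith [h1, h2]
  -- μ ≤ L
  have hμL : μ ≤ L := by
    obtain ⟨u, hu⟩ := exists_ne (0 : EuclideanSpace ℝ (Fin q))
    have h1 := mono u 0
    have h2 : ⟪gradg u - gradg 0, u - 0⟫ ≤ ‖gradg u - gradg 0‖ * ‖u - 0‖ :=
      real_inner_le_norm _ _
    have h3 := hsmooth u 0
    have hu' : 0 < ‖u - 0‖ := by
      rw [sub_zero]; exact norm_pos_iff.mpr hu
    nlinarith [h1, h2, mul_le_mul_of_nonneg_right h3 (le_of_lt hu'), mul_pos hu' hu',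
      sq_nonneg ‖u - 0‖]
  have hL : 0 < L := lt_of_lt_of_le hμ hμL
  -- gradient at minimizer is zero
  have hstar : gradg ystar = 0 := by
    have hloc : IsLocalMin g ystar := Filter.Eventually.of_forall hmin
    have := hloc.hasFDerivAt_eq_zero (hgrad ystar).hasFDerivAt
    have h0 : InnerProductSpace.toDual ℝ (EuclideanSpace ℝ (Fin q)) (gradg ystar) =
        InnerProductSpace.toDual ℝ (EuclideanSpace ℝ (Fin q)) 0 := by
      rw [this, map_zero]
    exact (InnerProductSpace.toDual ℝ _).injective h0
  -- descent lemma for g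
  have hdesc : ∀ x v, g (x + v) ≤ g x + ⟪gradg x, v⟫ + L / 2 * ‖v‖ ^ 2 :=
    aux_descent g gradg hgrad L (le_of_lt hL) hsmooth
  -- co-coercivity for strongly convex g : (L+μ) P ≥ μ L r² + a²   at (y, ystar)
  set h : EuclideanSpace ℝ (Fin q) → ℝ := fun z => g z - μ / 2 * ‖z‖ ^ 2 with hh
  set Fh : EuclideanSpace ℝ (Fin q) → EuclideanSpace ℝ (Fin q) :=
    fun z => gradg z - μ • z with hFh
  have hnorm_exp : ∀ w z : EuclideanSpace ℝ (Fin q),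
      ‖z‖ ^ 2 = ‖w‖ ^ 2 + 2 * ⟪w, z - w⟫ + ‖z - w‖ ^ 2 := by
    intro w z
    have := norm_add_sq_real w (z - w)
    rw [show w + (z - w) = z by abel] at this
    linarith
  have hconv_h : ∀ w z, h w + ⟪Fh w, z - w⟫ ≤ h z := by
    intro w z
    have h1 := hsc w z
    have e1 : ⟪Fh w, z - w⟫ = ⟪gradg w, z - w⟫ - μ * ⟪w, z - w⟫ := by
      rw [hFh]; rw [inner_sub_left, real_inner_smul_left]
    have e2 := hnorm_exp w z
    rw [hh]
    simp only []
    rw [e1]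
    nlinarith [h1, e2]
  have hdesc_h : ∀ ε : ℝ, 0 < ε → ∀ x v,
      h (x + v) ≤ h x + ⟪Fh x, v⟫ + (L - μ + ε) / 2 * ‖v‖ ^ 2 := by
    intro ε hε x v
    have h1 := hdesc x v
    have e1 : ⟪Fh x, v⟫ = ⟪gradg x, v⟫ - μ * ⟪x, v⟫ := by
      rw [hFh]; rw [inner_sub_left, real_inner_smul_left]
    have e2 : ‖x + v‖ ^ 2 = ‖x‖ ^ 2 + 2 * ⟪x, v⟫ + ‖v‖ ^ 2 := by
      have := hnorm_exp x (x + v)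
      rw [show x + v - x = v by abel] at this
      linarith
    rw [hh]
    simp only []
    rw [e1]
    nlinarith [sq_nonneg ‖v‖]
  have coco : μ * L * ‖y - ystar‖ ^ 2 + ‖gradg y‖ ^ 2 ≤
      (L + μ) * ⟪gradg y, y - ystar⟫ := by
    have hK : μ * ‖y - ystar‖ ^ 2 ≤ ⟪gradg y - gradg ystar, y - ystar⟫ := mono y ystar
    rw [hstar, sub_zero] at hK
    set P := (⟪gradg y, y - ystar⟫ : ℝ) with hP
    set K := P - μ * ‖y - ystar‖ ^ 2 with hKdef
    have hK0 : 0 ≤ K := by rw [hKdef]; linarith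
    have heps : ∀ ε : ℝ, 0 < ε →
        ‖Fh y - Fh ystar‖ ^ 2 ≤ (L - μ + ε) * ⟪Fh y - Fh ystar, y - ystar⟫ := by
      intro ε hε
      exact aux_cocoercive_convex h Fh (L - μ + ε) (by linarith) hconv_h (hdesc_h ε hε) y ystar
    have eF : Fh y - Fh ystar = gradg y - μ • (y - ystar) := by
      rw [hFh]; simp only []; rw [hstar]; rw [smul_sub]; abel
    have eL : ‖Fh y - Fh ystar‖ ^ 2 =
        ‖gradg y‖ ^ 2 - 2 * μ * P + μ ^ 2 * ‖y - ystar‖ ^ 2 := by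
      rw [eF, norm_sub_sq_real, real_inner_smul_right, norm_smul, Real.norm_eq_abs,
        abs_of_pos hμ, mul_pow, hP]
      ring
    have eR : ∀ ε : ℝ, (L - μ + ε) * ⟪Fh y - Fh ystar, y - ystar⟫ = (L - μ + ε) * K := by
      intro ε
      rw [eF, inner_sub_left, real_inner_smul_left, real_inner_self_eq_norm_sq, hKdef, hP]
    have hlim : ‖gradg y‖ ^ 2 - 2 * μ * P + μ ^ 2 * ‖y - ystar‖ ^ 2 ≤ (L - μ) * K := by
      apply le_of_forall_pos_le_add
      intro ε hε
      have hε' : 0 < ε / (K + 1) := by positivity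
      have := heps (ε / (K + 1)) hε'
      rw [eL, eR] at this
      have hKK : ε / (K + 1) * K ≤ ε := by
        rw [div_mul_eq_mul_div, div_le_iff₀ (by linarith : (0:ℝ) < K + 1)]
        nlinarith
      nlinarith
    rw [hKdef] at hlim
    nlinarith [hlim]
  -- assemble
  set e := ‖gradg y - D‖ with he
  set r := ‖ystar - y‖ with hr
  set a := ‖gradg y‖ with ha
  set d := ‖D‖ with hd
  set P := (⟪gradg y, y - ystar⟫ : ℝ) with hPdef
  have hrr : ‖y - ystar‖ = r := by rw [hr, norm_sub_rev]
  rw [hrr] at coco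
  have key1 : ⟪D, ystar - ytil⟫ = ⟪D, ystar - y⟫ + lam * d ^ 2 := by
    rw [hytil, show ystar - (y - lam • D) = (ystar - y) + lam • D by abel,
      inner_add_right, real_inner_smul_right, real_inner_self_eq_norm_sq]
  have key2 : ⟪D, ystar - y⟫ = ⟪D - gradg y, ystar - y⟫ + ⟪gradg y, ystar - y⟫ := by
    rw [inner_sub_left]; ring
  have key3 : ⟪D - gradg y, ystar - y⟫ ≤ e * r := by
    have h1 := real_inner_le_norm (D - gradg y) (ystar - y)
    have h2 : ‖D - gradg y‖ = e := by rw [he, norm_sub_rev]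
    rw [h2] at h1; exact h1
  have key4 : ⟪gradg y, ystar - y⟫ = -P := by
    rw [hPdef, show ystar - y = -(y - ystar) by abel, inner_neg_right]
  have key5 : d ≤ a + e := by
    calc d = ‖gradg y - (gradg y - D)‖ := by rw [hd, sub_sub_cancel]
      _ ≤ a + e := norm_sub_le _ _
  -- scalar inequality
  have he0 : 0 ≤ e := norm_nonneg _
  have hr0 : 0 ≤ r := norm_nonneg _
  have ha0 : 0 ≤ a := norm_nonneg _
  have hd0 : 0 ≤ d := norm_nonneg _
  have hLμ0 : (0:ℝ) < L + μ := by linarith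
  have hlam2 : lam * (L + μ) ≤ 1 / 2 := by
    rw [le_div_iff₀ (by linarith : (0:ℝ) < 2 * L + 2 * μ)] at hlam'
    linarith
  have hd2 : d ^ 2 ≤ 2 * a ^ 2 + 2 * e ^ 2 := by
    nlinarith [sq_nonneg (a - e), key5, hd0]
  have poly : (e * r - P + 3 / 4 * (lam * d ^ 2) + μ / 4 * r ^ 2) * μ * (L + μ) ≤
      2 * e ^ 2 * (L + μ) := by
    nlinarith [mul_le_mul_of_nonneg_left coco hμ.le,
      mul_nonneg hLμ0.le (sq_nonneg (2 * e - μ * r)),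
      mul_nonneg (by linarith : (0:ℝ) ≤ 1 / 2 - lam * (L + μ))
        (mul_nonneg hμ.le (sq_nonneg d)),
      mul_nonneg hμ.le (by linarith : (0:ℝ) ≤ 2 * a ^ 2 + 2 * e ^ 2 - d ^ 2),
      mul_nonneg (mul_nonneg (mul_pos hμ hμ).le (by linarith : (0:ℝ) ≤ L - μ)) (sq_nonneg r),
      mul_nonneg hμ.le (sq_nonneg a), mul_nonneg hLμ0.le (sq_nonneg e)]
  have poly2 : (e * r - P + 3 / 4 * (lam * d ^ 2) + μ / 4 * r ^ 2) * μ ≤ 2 * e ^ 2 := by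
    exact (mul_le_mul_iff_of_pos_right hLμ0).mp poly
  have poly3 : e * r - P + 3 / 4 * (lam * d ^ 2) + μ / 4 * r ^ 2 ≤ 2 * e ^ 2 / μ := by
    rw [le_div_iff₀ hμ]; exact poly2
  have hfin : (2:ℝ) / μ * e ^ 2 = 2 * e ^ 2 / μ := by ring
  have lhs_le : ⟪D, ystar - ytil⟫ ≤ e * r - P + lam * d ^ 2 := by
    rw [key1, key2, key4]; linarith [key3]
  linarith [poly3, lhs_le, hfin]
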